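/- Let p ≥ 2 be a natural number, k > 0, ε > 0, and α ∈ (0,1). Let Λ̃ = {(t,x) ∈ ℝ² : 0 ≤ t < 1 and t < x < 2 - t}. Then there is NO continuously differentiable function w : Λ̃ → ℝ such that w(0,x) = 2ε·(log(6/x))^α for all x ∈ (0,2) and (∂_t w + ∂_x w)(t,x) ≥ k·w(t,x)^p for all (t,x) ∈ Λ̃. -/

import Mathlib

open Set

/-- There is no `C¹` function on the backward light triangle
`Λ̃ = {(t,x) : 0 ≤ t < 1, t < x < 2-t}` with initial data `2ε (log (6/x))^α` on `(0,2)`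
satisfying the differential inequality `∂_t w + ∂_x w ≥ k w^p` on `Λ̃`. -/
theorem no_global_supersolution
    (p : ℕ) (hp : 2 ≤ p) (k ε α : ℝ) (hk : 0 < k) (hε : 0 < ε)
    (hα : α ∈ Set.Ioo (0 : ℝ) 1)
    (Λ : Set (ℝ × ℝ))
    (hΛ : Λ = {q : ℝ × ℝ | 0 ≤ q.1 ∧ q.1 < 1 ∧ q.1 < q.2 ∧ q.2 < 2 - q.1}) :
    ¬ ∃ (w : ℝ × ℝ → ℝ) (Dw : ℝ × ℝ → ℝ × ℝ →L[ℝ] ℝ),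
      (∀ q ∈ Λ, HasFDerivWithinAt w (Dw q) Λ q) ∧
      ContinuousOn Dw Λ ∧
      (∀ x ∈ Set.Ioo (0 : ℝ) 2, w (0, x) = 2 * ε * Real.log (6 / x) ^ α) ∧
      (∀ q ∈ Λ, k * w q ^ p ≤ Dw q (1, 1)) := by
  subst hΛ
  rintro ⟨w, Dw, hw, -, hinit, hde⟩
  -- abbreviations
  set m : ℕ := p - 1 with hm_def
  have hm1 : 1 ≤ m := by omega
  have hmpos : (0:ℝ) < m := by exact_mod_cast hm1
  have h2ε : (0:ℝ) < 2 * ε := by linarith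
  -- choice of constants
  set B : ℝ := max 1 (2 / (m * k * (2*ε)^m) + 1) with hB_def
  have hB1 : (1:ℝ) ≤ B := le_max_left _ _
  have hBpos : (0:ℝ) < B := lt_of_lt_of_le one_pos hB1
  set M : ℝ := max (Real.log 6 + 1) (max 1 (B ^ (1/α))) with hM_def
  have hM1 : (1:ℝ) ≤ M := le_trans (le_max_left _ _) (le_max_right _ _)
  have hMpos : (0:ℝ) < M := lt_of_lt_of_le one_pos hM1
  have hMlog : Real.log 6 < M := lt_of_lt_of_le (by linarith) (le_max_left _ _)
  set x₀ : ℝ := 6 * Real.exp (-M) with hx₀_def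
  have hx₀pos : 0 < x₀ := by positivity
  have hx₀lt1 : x₀ < 1 := by
    have h6 : (0:ℝ) < 6 := by norm_num
    have h := Real.exp_lt_exp.mpr (neg_lt_neg hMlog)
    rw [Real.exp_neg (Real.log 6), Real.exp_log h6] at h
    calc x₀ < 6 * (6:ℝ)⁻¹ := mul_lt_mul_of_pos_left h h6
      _ = 1 := by norm_num
  have hlogx₀ : Real.log (6 / x₀) = M := by
    have h : 6 / x₀ = Real.exp M := by
      rw [hx₀_def, Real.exp_neg]
      field_simp
    rw [h, Real.log_exp]
  -- B ≤ M ^ α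
  have hMα : B ≤ M ^ α := by
    have h1 : B ^ (1/α) ≤ M := le_trans (le_max_right _ _) (le_max_right _ _)
    have h2 : (B ^ (1/α)) ^ α ≤ M ^ α :=
      Real.rpow_le_rpow (Real.rpow_nonneg hBpos.le _) h1 hα.1.le
    have h3 : (B ^ (1/α)) ^ α = B := by
      rw [← Real.rpow_mul hBpos.le, one_div, inv_mul_cancel₀ (ne_of_gt hα.1),
        Real.rpow_one]
    rwa [h3] at h2
  have hMα1 : (1:ℝ) ≤ M ^ α := le_trans hB1 hMα
  -- the initial value c and its key size property
  set c : ℝ := 2 * ε * M ^ α with hc_def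
  have hcpos : 0 < c := by positivity
  have hcm : 2 / (m * k) < c ^ m := by
    have hcmeq : c ^ m = (2*ε)^m * (M ^ α)^m := by rw [hc_def, mul_pow]
    have hpow : (2*ε)^m * B ≤ c ^ m := by
      rw [hcmeq]
      have h1 : B ≤ (M ^ α) ^ m :=
        le_trans (le_self_pow₀ hB1 (by omega)) (pow_le_pow_left₀ hBpos.le hMα m)
      exact mul_le_mul_of_nonneg_left h1 (by positivity)
    have hBgt : 2 / (m * k * (2*ε)^m) + 1 ≤ B := le_max_right _ _
    have h2εm : (0:ℝ) < (2*ε)^m := by positivity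
    have key : 2 / (m * k) < (2*ε)^m * B := by
      have : (2*ε)^m * (2 / (m * k * (2*ε)^m)) = 2 / (m * k) := by
        field_simp
      nlinarith
    linarith
  have hkey : (c ^ m)⁻¹ < m * k / 2 := by
    have h1 : (0:ℝ) < 2 / (m * k) := by positivity
    have h2 := one_div_lt_one_div_of_lt h1 hcm
    rw [one_div, one_div_div] at h2
    linarith
  -- the characteristic line
  set L : ℝ → ℝ × ℝ := fun t => (t, t + x₀) with hL_def
  set I : Set ℝ := Icc (0:ℝ) (1/2) with hI_def
  have hLΛ : ∀ t ∈ I, L t ∈ {q : ℝ × ℝ | 0 ≤ q.1 ∧ q.1 < 1 ∧ q.1 < q.2 ∧ q.2 < 2 - q.1} := by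
    rintro t ⟨ht0, ht1⟩
    refine ⟨ht0, by linarith, by simp only [hL_def]; linarith, ?_⟩
    simp only [hL_def]
    linarith
  have hLder : ∀ t : ℝ, HasDerivAt L ((1:ℝ), (1:ℝ)) t := fun t =>
    HasDerivAt.prodMk (hasDerivAt_id t) ((hasDerivAt_id t).add_const x₀)
  set g : ℝ → ℝ := fun t => w (L t) with hg_def
  have hg : ∀ t ∈ I, HasDerivWithinAt g (Dw (L t) (1, 1)) I t := fun t ht =>
    (hw (L t) (hLΛ t ht)).comp_hasDerivWithinAt t ((hLder t).hasDerivWithinAt)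
      (fun s hs => hLΛ s hs)
  have hgineq : ∀ t ∈ I, k * (g t) ^ p ≤ Dw (L t) (1, 1) := fun t ht =>
    hde (L t) (hLΛ t ht)
  have hcont : ContinuousOn g I := fun t ht => (hg t ht).continuousWithinAt
  have hg0 : g 0 = c := by
    have hx₀mem : x₀ ∈ Set.Ioo (0:ℝ) 2 := ⟨hx₀pos, by linarith⟩
    have : g 0 = w (0, x₀) := by simp [hg_def, hL_def]
    rw [this, hinit x₀ hx₀mem, hlogx₀]
  -- positivity of g on I
  have hgpos : ∀ t ∈ I, c / 2 < g t := by
    by_contra hcon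
    push_neg at hcon
    obtain ⟨t₁, ht₁, hgt₁⟩ := hcon
    set A : Set ℝ := {t ∈ I | g t ≤ c / 2} with hA_def
    have hAne : A.Nonempty := ⟨t₁, ht₁, hgt₁⟩
    have hAcl : IsClosed A := hcont.preimage_isClosed_of_isClosed isClosed_Icc isClosed_Iic
    have hAbdd : BddBelow A := ⟨0, fun t h => h.1.1⟩
    set t₀ : ℝ := sInf A with ht₀_def
    have ht₀A : t₀ ∈ A := hAcl.csInf_mem hAne hAbdd
    have ht₀I : t₀ ∈ I := ht₀A.1
    have hgt₀ : g t₀ ≤ c / 2 := ht₀A.2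
    have ht₀pos : 0 < t₀ := by
      rcases eq_or_lt_of_le ht₀I.1 with h | h
      · exfalso; rw [← h] at hgt₀; rw [hg0] at hgt₀; linarith
      · exact h
    have hlt : ∀ s, 0 ≤ s → s < t₀ → c / 2 < g s := by
      intro s h0 hsl
      by_contra hle
      push_neg at hle
      have hsA : s ∈ A := ⟨⟨h0, hsl.le.trans ht₀I.2⟩, hle⟩
      exact absurd (csInf_le hAbdd hsA) (not_le.mpr hsl)
    have hsub : Icc (0:ℝ) t₀ ⊆ I := Icc_subset_Icc le_rfl ht₀I.2
    have hmono : MonotoneOn g (Icc 0 t₀) := by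
      apply monotoneOn_of_deriv_nonneg (convex_Icc _ _) (hcont.mono hsub)
      · intro s hs
        rw [interior_Icc] at hs
        have hsI : I ∈ nhds s :=
          Icc_mem_nhds hs.1 (lt_of_lt_of_le hs.2 ht₀I.2)
        exact (((hg s (hsub (Ioo_subset_Icc_self hs))).hasDerivAt
          hsI).differentiableAt).differentiableWithinAt
      · intro s hs
        rw [interior_Icc] at hs
        have hsmem : s ∈ I := hsub (Ioo_subset_Icc_self hs)
        have hsI : I ∈ nhds s := Icc_mem_nhds hs.1 (lt_of_lt_of_le hs.2 ht₀I.2)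
        have hda := (hg s hsmem).hasDerivAt hsI
        rw [hda.deriv]
        have hgs : c / 2 < g s := hlt s hs.1.le hs.2
        have hgsp : 0 < g s := by linarith
        have h1 : 0 < k * g s ^ p := by positivity
        linarith [hgineq s hsmem]
    have h01 : (0:ℝ) ∈ Icc (0:ℝ) t₀ := ⟨le_rfl, ht₀pos.le⟩
    have ht01 : t₀ ∈ Icc (0:ℝ) t₀ := ⟨ht₀pos.le, le_rfl⟩
    have := hmono h01 ht01 ht₀pos.le
    rw [hg0] at this
    linarith
  have hgpos' : ∀ t ∈ I, 0 < g t := fun t ht => lt_trans (by linarith) (hgpos t ht)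
  -- the function h = g^{-m} + m k t
  set φ : ℝ → ℝ := fun t => (g t) ^ (-(m:ℤ)) + (m * k) * t with hφ_def
  have hφder : ∀ t ∈ I, HasDerivWithinAt φ
      (((-(m:ℤ)):ℝ) * (g t) ^ (-(m:ℤ) - 1) * (Dw (L t) (1, 1)) + m * k) I t := by
    intro t ht
    have h1 : HasDerivWithinAt (fun t => (g t) ^ (-(m:ℤ)))
        (((-(m:ℤ)):ℝ) * (g t) ^ (-(m:ℤ) - 1) * (Dw (L t) (1, 1))) I t := by
      have := (hasDerivAt_zpow (-(m:ℤ)) (g t)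
        (Or.inl (hgpos' t ht).ne')).comp_hasDerivWithinAt t (hg t ht)
      simpa [Function.comp_def] using this
    have h2 : HasDerivWithinAt (fun t : ℝ => (m * k : ℝ) * t) (m * k) I t := by
      simpa using ((hasDerivAt_id t).const_mul ((m:ℝ) * k)).hasDerivWithinAt
    exact h1.add h2
  have hφcont : ContinuousOn φ I := fun t ht => (hφder t ht).continuousWithinAt
  -- the derivative of φ is nonpositive
  have hφnonpos : ∀ t ∈ I,
      ((-(m:ℤ)):ℝ) * (g t) ^ (-(m:ℤ) - 1) * (Dw (L t) (1, 1)) + m * k ≤ 0 := by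
    intro t ht
    have hgt := hgpos' t ht
    have hzp : (0:ℝ) < (g t) ^ (-(m:ℤ) - 1) := by
      apply zpow_pos hgt
    have hD := hgineq t ht
    have hcoef : ((-(m:ℤ)):ℝ) * (g t) ^ (-(m:ℤ) - 1) < 0 := by
      apply mul_neg_of_neg_of_pos _ hzp
      simp only [Int.cast_neg, Int.cast_natCast, neg_neg, neg_lt_zero]
      exact hmpos
    have h1 : ((-(m:ℤ)):ℝ) * (g t) ^ (-(m:ℤ) - 1) * (Dw (L t) (1, 1)) ≤
        ((-(m:ℤ)):ℝ) * (g t) ^ (-(m:ℤ) - 1) * (k * (g t) ^ p) :=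
      mul_le_mul_of_nonpos_left hD hcoef.le
    have h2 : ((-(m:ℤ)):ℝ) * (g t) ^ (-(m:ℤ) - 1) * (k * (g t) ^ p) = -(m * k) := by
      have hz : (g t) ^ (-(m:ℤ) - 1) * (g t) ^ (p:ℤ) = 1 := by
        rw [← zpow_add₀ hgt.ne']
        have : -(m:ℤ) - 1 + (p:ℤ) = 0 := by
          have : (m:ℤ) = (p:ℤ) - 1 := by
            rw [hm_def]; push_cast [Nat.cast_sub (by omega : 1 ≤ p)]; ring
          omega
        rw [this, zpow_zero]
      have hpn : (g t) ^ (p:ℤ) = (g t) ^ p := zpow_natCast _ _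
      calc ((-(m:ℤ)):ℝ) * (g t) ^ (-(m:ℤ) - 1) * (k * (g t) ^ p)
          = -((m:ℝ) * k) * ((g t) ^ (-(m:ℤ) - 1) * (g t) ^ (p:ℤ)) := by
            rw [hpn]; push_cast; ring
        _ = -(m * k) := by rw [hz, mul_one]
    linarith
  -- φ is antitone
  have hintI : interior I = Ioo (0:ℝ) (1/2) := by rw [hI_def, interior_Icc]
  have hφanti : AntitoneOn φ I := by
    apply antitoneOn_of_deriv_nonpos (convex_Icc _ _) hφcont
    · intro s hs
      rw [hintI] at hs
      have hsmem : s ∈ I := Ioo_subset_Icc_self hs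
      have hsI : I ∈ nhds s := Icc_mem_nhds hs.1 hs.2
      exact ((hφder s hsmem).hasDerivAt hsI).differentiableAt.differentiableWithinAt
    · intro s hs
      rw [hintI] at hs
      have hsmem : s ∈ I := Ioo_subset_Icc_self hs
      have hsI : I ∈ nhds s := Icc_mem_nhds hs.1 hs.2
      rw [((hφder s hsmem).hasDerivAt hsI).deriv]
      exact hφnonpos s hsmem
  -- evaluate φ at 0 and 1/2
  have h0I : (0:ℝ) ∈ I := ⟨le_rfl, by norm_num⟩
  have hbI : (1/2:ℝ) ∈ I := ⟨by norm_num, le_rfl⟩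
  have hφ0 : φ 0 = (c ^ m)⁻¹ := by
    simp only [hφ_def, hg0, mul_zero, add_zero, zpow_neg, zpow_natCast]
  have hφb : m * k / 2 < φ (1/2) := by
    have hgb := hgpos' (1/2) hbI
    have h1 : (0:ℝ) < (g (1/2)) ^ (-(m:ℤ)) := zpow_pos hgb _
    simp only [hφ_def]
    nlinarith
  have hle := hφanti h0I hbI (by norm_num)
  rw [hφ0] at hle
  linarith
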